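/- arXiv:1602.00400 — 3 statements merged into one kernel-verified Lean document; each statement's English description precedes it below -/
import Mathlib

section
/- Let 𝔣 be a finite field and let Ā and B̄ be nonempty subsets of 𝔣. Then (1/|𝔣^×|) Σ_{α ∈ 𝔣^×} ‖P_Ā ∗ (α P_B̄)‖_2² ≤ min(1, 1/(|Ā||B̄|) + 1/|𝔣|). -/
set_option synthInstance.maxHeartbeats 1000000
set_option maxHeartbeats 2000000

/-- The uniform probability distribution on a finite subset `X` of `𝔣`:
`P_X(x) = 1/|X|` if `x ∈ X` and `0` otherwise. -/
noncomputable def unifDist {𝔣 : Type*} [DecidableEq 𝔣] (X : Finset 𝔣) : 𝔣 → ℝ :=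
  fun x => if x ∈ X then 1 / (X.card : ℝ) else 0

/-- Additive convolution of two distributions: `(μ ∗ ν)(z) := Σ_{x+y=z} μ(x)ν(y)`. -/
def convDist {𝔣 : Type*} [AddCommGroup 𝔣] [Fintype 𝔣] (μ ν : 𝔣 → ℝ) : 𝔣 → ℝ :=
  fun z => ∑ x : 𝔣, μ x * ν (z - x)

/-- The scaled distribution `(αν)(x) := ν(α⁻¹x)` for a unit `α`. -/
def scaleDist {𝔣 : Type*} [Field 𝔣] (α : 𝔣ˣ) (ν : 𝔣 → ℝ) : 𝔣 → ℝ :=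
  fun x => ν (((α⁻¹ : 𝔣ˣ) : 𝔣) * x)

/-- The squared `ℓ²`-norm `‖μ‖₂² := Σ_x μ(x)²`. -/
def l2NormSq {𝔣 : Type*} [Fintype 𝔣] (μ : 𝔣 → ℝ) : ℝ :=
  ∑ x : 𝔣, (μ x) ^ 2

lemma sum_units_coe (𝔣 : Type) [Field 𝔣] [Fintype 𝔣] [DecidableEq 𝔣] (g : 𝔣 → ℝ) :
    ∑ α : 𝔣ˣ, g (α : 𝔣) = (∑ c : 𝔣, g c) - g 0 := by
  have h1 : ∑ α : 𝔣ˣ, g (α : 𝔣) = ∑ a : {a : 𝔣 // a ≠ 0}, g a :=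
    Fintype.sum_equiv unitsEquivNeZero _ _ (fun α => by simp [unitsEquivNeZero])
  have h2 : ∑ a : {a : 𝔣 // a ≠ 0}, g a = ∑ c ∈ Finset.univ.filter (· ≠ (0:𝔣)), g c :=
    (Finset.sum_subtype _ (by simp) g).symm
  rw [h1, h2, Finset.filter_ne' Finset.univ 0, eq_sub_iff_add_eq,
    Finset.sum_erase_add _ _ (Finset.mem_univ 0)]

lemma sum_unifDist {𝔣 : Type*} [DecidableEq 𝔣] [Fintype 𝔣] (X : Finset 𝔣) (hX : X.Nonempty) :
    ∑ x : 𝔣, unifDist X x = 1 := by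
  have hc : (X.card : ℝ) ≠ 0 := by exact_mod_cast Finset.card_ne_zero_of_mem hX.choose_spec
  simp only [unifDist]
  rw [Finset.sum_ite_mem, Finset.univ_inter, Finset.sum_const, nsmul_eq_mul]
  field_simp

lemma sum_sq_unifDist {𝔣 : Type*} [DecidableEq 𝔣] [Fintype 𝔣] (X : Finset 𝔣) (hX : X.Nonempty) :
    ∑ x : 𝔣, unifDist X x * unifDist X x = 1 / (X.card : ℝ) := by
  have hc : (X.card : ℝ) ≠ 0 := by exact_mod_cast Finset.card_ne_zero_of_mem hX.choose_spec
  have : ∀ x : 𝔣, unifDist X x * unifDist X x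
      = if x ∈ X then 1/(X.card:ℝ) * (1/(X.card:ℝ)) else 0 := by
    intro x; unfold unifDist; by_cases h : x ∈ X <;> simp [h]
  rw [Finset.sum_congr rfl (fun x _ => this x), Finset.sum_ite_mem, Finset.univ_inter,
    Finset.sum_const, nsmul_eq_mul]
  field_simp

/-- **Lemma 8 (average `ℓ²`-norm of scalar twisted convolutions).**
For nonempty subsets `Ā, B̄` of a finite field `𝔣`:
`(1/|𝔣^×|) Σ_{α ∈ 𝔣^×} ‖P_Ā ∗ (α P_B̄)‖₂² ≤ min(1, 1/(|Ā||B̄|) + 1/|𝔣|)`. -/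
theorem avg_l2_norm_of_convolution
    (𝔣 : Type) [Field 𝔣] [Fintype 𝔣] [DecidableEq 𝔣]
    (Abar Bbar : Finset 𝔣) (hA : Abar.Nonempty) (hB : Bbar.Nonempty) :
    (1 / (Fintype.card 𝔣ˣ : ℝ)) *
        ∑ α : 𝔣ˣ, l2NormSq (convDist (unifDist Abar) (scaleDist α (unifDist Bbar))) ≤
      min 1 (1 / ((Abar.card : ℝ) * (Bbar.card : ℝ)) + 1 / (Fintype.card 𝔣 : ℝ)) := by
  classical
  set μ := unifDist Abar with hμdef
  set ν := unifDist Bbar with hνdef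
  set m : ℝ := (Abar.card : ℝ) with hmdef
  set n : ℝ := (Bbar.card : ℝ) with hndef
  set q : ℝ := (Fintype.card 𝔣 : ℝ) with hqdef
  have hm1 : (1:ℝ) ≤ m := by rw [hmdef]; exact_mod_cast Finset.card_pos.2 hA
  have hn1 : (1:ℝ) ≤ n := by rw [hndef]; exact_mod_cast Finset.card_pos.2 hB
  have hmq : m ≤ q := by rw [hmdef, hqdef]; exact_mod_cast Finset.card_le_univ Abar
  have hnq : n ≤ q := by rw [hndef, hqdef]; exact_mod_cast Finset.card_le_univ Bbar
  have hq2 : (2:ℝ) ≤ q := by rw [hqdef]; exact_mod_cast Fintype.one_lt_card (α := 𝔣)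
  have hm0 : (0:ℝ) < m := lt_of_lt_of_le one_pos hm1
  have hn0 : (0:ℝ) < n := lt_of_lt_of_le one_pos hn1
  have hq1 : (0:ℝ) < q - 1 := by linarith
  have hcardu : (Fintype.card 𝔣ˣ : ℝ) = q - 1 := by
    rw [Fintype.card_units, hqdef]
    have : 1 ≤ Fintype.card 𝔣 := Fintype.card_pos
    push_cast [Nat.cast_sub this]
    ring
  have hμ1 : ∑ x : 𝔣, μ x = 1 := sum_unifDist Abar hA
  have hμ2 : ∑ x : 𝔣, μ x * μ x = 1 / m := sum_sq_unifDist Abar hA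
  have hν1 : ∑ x : 𝔣, ν x = 1 := sum_unifDist Bbar hB
  have hν2 : ∑ x : 𝔣, ν x * ν x = 1 / n := sum_sq_unifDist Bbar hB
  set G : 𝔣 → ℝ := fun c => ∑ u : 𝔣, ν u * ν (u + c) with hGdef
  have hG0 : G 0 = 1 / n := by simp only [hGdef, add_zero]; exact hν2
  have hGsum : ∑ c : 𝔣, G c = 1 := by
    rw [hGdef]
    rw [Finset.sum_comm]
    have : ∀ u : 𝔣, ∑ c : 𝔣, ν u * ν (u + c) = ν u := by
      intro u
      rw [← Finset.mul_sum]
      have : ∑ c : 𝔣, ν (u + c) = ∑ c : 𝔣, ν c :=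
        Fintype.sum_equiv (Equiv.addLeft u) _ _ (fun c => rfl)
      rw [this, hν1, mul_one]
    rw [Finset.sum_congr rfl (fun u _ => this u)]
    exact hν1
  -- per-α identity
  have step1 : ∀ α : 𝔣ˣ, l2NormSq (convDist μ (scaleDist α ν)) =
      ∑ x : 𝔣, ∑ y : 𝔣, μ x * μ y * G (((α⁻¹ : 𝔣ˣ) : 𝔣) * (x - y)) := by
    intro α
    set a : 𝔣 := ((α⁻¹ : 𝔣ˣ) : 𝔣) with hadef
    have hai : a * (α : 𝔣) = 1 := α.inv_mul
    have hia : (α : 𝔣) * a = 1 := α.mul_inv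
    unfold l2NormSq convDist scaleDist
    have expand : ∀ z : 𝔣, (∑ x : 𝔣, μ x * ν (a * (z - x))) ^ 2
        = ∑ x : 𝔣, ∑ y : 𝔣, (μ x * ν (a * (z - x))) * (μ y * ν (a * (z - y))) := by
      intro z; rw [sq, Finset.sum_mul_sum]
    rw [Finset.sum_congr rfl fun z _ => expand z]
    rw [Finset.sum_comm]
    refine Finset.sum_congr rfl fun x _ => ?_
    rw [Finset.sum_comm]
    refine Finset.sum_congr rfl fun y _ => ?_
    symm
    rw [hGdef]
    rw [Finset.mul_sum]
    let e : 𝔣 ≃ 𝔣 := {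
      toFun := fun u => x + (α : 𝔣) * u
      invFun := fun z => a * (z - x)
      left_inv := fun u => by
        calc a * ((x + (α:𝔣)*u) - x) = (a * (α:𝔣)) * u := by ring
          _ = u := by rw [hai, one_mul]
      right_inv := fun z => by
        calc x + (α:𝔣) * (a * (z - x)) = x + ((α:𝔣) * a) * (z - x) := by ring
          _ = z := by rw [hia]; ring }
    refine Fintype.sum_equiv e (fun u => μ x * μ y * (ν u * ν (u + a * (x - y))))
      (fun z => (μ x * ν (a * (z - x))) * (μ y * ν (a * (z - y)))) (fun u => ?_)
    show μ x * μ y * (ν u * ν (u + a * (x - y)))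
        = (μ x * ν (a * ((x + (α:𝔣)*u) - x))) * (μ y * ν (a * ((x + (α:𝔣)*u) - y)))
    have h1 : a * ((x + (α:𝔣)*u) - x) = u := by
      calc a * ((x + (α:𝔣)*u) - x) = (a * (α:𝔣)) * u := by ring
        _ = u := by rw [hai, one_mul]
    have h2 : a * ((x + (α:𝔣)*u) - y) = u + a * (x - y) := by
      calc a * ((x + (α:𝔣)*u) - y) = (a * (α:𝔣)) * u + a * (x - y) := by ring
        _ = u + a * (x - y) := by rw [hai, one_mul]
    rw [h1, h2]; ring
  -- sum over α of G at scaled points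
  have hαsum : ∀ d : 𝔣, ∑ α : 𝔣ˣ, G (((α⁻¹ : 𝔣ˣ) : 𝔣) * d)
      = if d = 0 then (q-1)/n else 1 - 1/n := by
    intro d
    have hinv : ∑ α : 𝔣ˣ, G (((α⁻¹ : 𝔣ˣ) : 𝔣) * d) = ∑ β : 𝔣ˣ, G ((β : 𝔣) * d) :=
      Fintype.sum_equiv (Equiv.inv 𝔣ˣ) _ _ (fun β => rfl)
    rw [hinv]
    by_cases hd : d = 0
    · subst hd
      simp only [mul_zero, hG0, Finset.sum_const, nsmul_eq_mul, if_pos]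
      rw [Finset.card_univ, hcardu]; ring
    · rw [if_neg hd]
      have h2 : ∑ β : 𝔣ˣ, G ((β : 𝔣) * d) = ∑ γ : 𝔣ˣ, G (γ : 𝔣) :=
        Fintype.sum_equiv (Equiv.mulRight (Units.mk0 d hd)) _ _
          (fun β => by simp [Units.val_mul])
      rw [h2, sum_units_coe 𝔣 G, hGsum, hG0]
  -- exact value of the sum
  have hS : ∑ α : 𝔣ˣ, l2NormSq (convDist μ (scaleDist α ν))
      = (1 - 1/n) + ((q-1)/n - (1 - 1/n)) * (1/m) := by
    rw [Finset.sum_congr rfl (fun α _ => step1 α)]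
    have hswap : ∑ α : 𝔣ˣ, ∑ x : 𝔣, ∑ y : 𝔣, μ x * μ y * G (((α⁻¹:𝔣ˣ):𝔣) * (x - y))
        = ∑ x : 𝔣, ∑ y : 𝔣, ∑ α : 𝔣ˣ, μ x * μ y * G (((α⁻¹:𝔣ˣ):𝔣) * (x - y)) := by
      rw [Finset.sum_comm]
      exact Finset.sum_congr rfl fun x _ => Finset.sum_comm
    rw [hswap]
    have h3 : ∀ x y : 𝔣, ∑ α : 𝔣ˣ, μ x * μ y * G (((α⁻¹:𝔣ˣ):𝔣) * (x - y))
        = μ x * μ y * (1 - 1/n) + (if y = x then μ x * μ y * ((q-1)/n - (1 - 1/n)) else 0) := by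
      intro x y
      rw [← Finset.mul_sum, hαsum (x - y)]
      by_cases h : x = y
      · simp [h, sub_eq_zero]; ring
      · rw [if_neg (sub_ne_zero.2 h), if_neg (fun hyx => h hyx.symm)]; ring
    rw [Finset.sum_congr rfl fun x _ => Finset.sum_congr rfl fun y _ => h3 x y]
    have h5 : ∀ x : 𝔣, ∑ y : 𝔣,
        (μ x * μ y * (1 - 1/n) + (if y = x then μ x * μ y * ((q-1)/n - (1 - 1/n)) else 0))
        = μ x * (1 - 1/n) + μ x * μ x * ((q-1)/n - (1 - 1/n)) := by
      intro x
      rw [Finset.sum_add_distrib,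
        Finset.sum_ite_eq' Finset.univ x (fun y => μ x * μ y * ((q-1)/n - (1 - 1/n)))]
      simp only [Finset.mem_univ, if_pos]
      congr 1
      calc ∑ y : 𝔣, μ x * μ y * (1 - 1/n)
          = ∑ y : 𝔣, μ y * (μ x * (1 - 1/n)) := Finset.sum_congr rfl (fun y _ => by ring)
        _ = (∑ y : 𝔣, μ y) * (μ x * (1 - 1/n)) := by rw [Finset.sum_mul]
        _ = μ x * (1 - 1/n) := by rw [hμ1, one_mul]
    rw [Finset.sum_congr rfl fun x _ => h5 x, Finset.sum_add_distrib]
    have h6 : ∑ x : 𝔣, μ x * (1 - 1/n) = 1 - 1/n := by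
      rw [← Finset.sum_mul, hμ1, one_mul]
    have h7 : ∑ x : 𝔣, μ x * μ x * ((q-1)/n - (1 - 1/n))
        = ((q-1)/n - (1 - 1/n)) * (1/m) := by
      rw [← Finset.sum_mul, hμ2]; ring
    rw [h6, h7]
  -- final arithmetic
  rw [hS, hcardu]
  have hE : 1/(q-1) * ((1 - 1/n) + ((q-1)/n - (1 - 1/n)) * (1/m))
      = (m*n - m - n + q) / ((q-1)*(m*n)) := by
    field_simp
    ring
  rw [hE, le_min_iff]
  constructor
  · rw [div_le_one (by positivity)]
    nlinarith [mul_nonneg (by linarith : (0:ℝ) ≤ q - 2)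
      (by nlinarith : (0:ℝ) ≤ m*n - 1)]
  · have hR : 1/(m*n) + 1/q = (q + m*n) / ((m*n)*q) := by
      field_simp
    rw [hR, div_le_div_iff₀ (by positivity) (by positivity)]
    nlinarith [mul_nonneg (mul_nonneg (mul_nonneg hm0.le hn0.le) hm0.le)
        (by linarith : (0:ℝ) ≤ q - n),
      mul_nonneg (mul_nonneg (mul_nonneg hm0.le hn0.le) (by linarith : (0:ℝ) ≤ q))
        (by linarith : (0:ℝ) ≤ n - 1)]
end

section
/- Let N be a positive integer and T any subset of {0,1,…,N−1}. Then for any positive integers k_1, k_2 with k_1 + k_2 < N, D_T(k_1 + k_2) ≤ D_T(k_1) + D_T(k_2). -/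
/-- `D_T(k) := |(T ∩ [0, N−1−k]) \ (T − k)|` for a subset `T` of `{0, 1, …, N−1}`,
written as the number of `i ∈ T` with `i + k ≤ N − 1` and `i + k ∉ T`. -/
noncomputable def DT (N : ℕ) (T : Set ℕ) (k : ℕ) : ℕ :=
  Nat.card {i : ℕ | i ∈ T ∧ i + k < N ∧ i + k ∉ T}

/-- **Lemma 13 (subadditivity of `D_T`).**
For any subset `T` of `{0, …, N−1}` and positive integers `k₁, k₂` with `k₁ + k₂ < N`,
`D_T(k₁ + k₂) ≤ D_T(k₁) + D_T(k₂)`. -/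
theorem DT_subadditive
    (N : ℕ) (hN : 0 < N) (T : Set ℕ) (hT : ∀ t ∈ T, t < N)
    (k₁ k₂ : ℕ) (hk₁ : 0 < k₁) (hk₂ : 0 < k₂) (hkN : k₁ + k₂ < N) :
    DT N T (k₁ + k₂) ≤ DT N T k₁ + DT N T k₂ := by
  set A : Set ℕ := {i : ℕ | i ∈ T ∧ i + (k₁ + k₂) < N ∧ i + (k₁ + k₂) ∉ T} with hA
  set B : Set ℕ := {i : ℕ | i ∈ T ∧ i + k₁ < N ∧ i + k₁ ∉ T} with hB
  set C : Set ℕ := {i : ℕ | i ∈ T ∧ i + k₂ < N ∧ i + k₂ ∉ T} with hC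
  have hBfin : B.Finite := (Set.finite_Iio N).subset (fun i hi => hT i hi.1)
  have hCfin : C.Finite := (Set.finite_Iio N).subset (fun i hi => hT i hi.1)
  have hBf : Finite B := hBfin
  have hCf : Finite C := hCfin
  have hmemB : ∀ i : A, (i : ℕ) + k₁ ∉ T → (i : ℕ) ∈ B := by
    intro i h
    obtain ⟨hiT, hiN, hiNT⟩ := i.2
    exact ⟨hiT, by omega, h⟩
  have hmemC : ∀ i : A, (i : ℕ) + k₁ ∈ T → (i : ℕ) + k₁ ∈ C := by
    intro i h
    obtain ⟨hiT, hiN, hiNT⟩ := i.2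
    refine ⟨h, by omega, ?_⟩
    rw [add_assoc]; exact hiNT
  classical
  let f : A → B ⊕ C := fun i =>
    if h : (i : ℕ) + k₁ ∈ T then Sum.inr ⟨(i : ℕ) + k₁, hmemC i h⟩
    else Sum.inl ⟨(i : ℕ), hmemB i h⟩
  have hinj : Function.Injective f := by
    intro a b hab
    simp only [f] at hab
    split_ifs at hab with h1 h2 h2 <;> simp_all [Subtype.ext_iff] <;> omega
  have := Nat.card_le_card_of_injective f hinj
  simpa [DT, Nat.card_sum, ← hA, ← hB, ← hC] using this
end

section
/- Let 0 < δ < ε < 1. For every finite extension K of ℚ_p whose residue field 𝔣 is sufficiently large (depending on ε and δ), and for any 0 < δ' ≤ εδ/4, the following holds: let N be a positive integer and A ⊆ π_{𝔭^N}(𝒪) satisfy (1) |π_{𝔭^i}(A)| ≥ |𝔣|^{iε} for every integer i with Nδ' ≤ i ≤ N, and (2) |A + A| ≤ |A|·|𝔣|^{Nδ'}. Then there exist a subset A' ⊆ A and integers m_0, …, m_{N−1} such that A' is (m_0,…,m_{N−1})-regular, |A'| ≥ |A|/(2 log |𝔣|)^N, and |π_{𝔭^i}(A')| ≥ |𝔣|^{iε/2}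 for every integer i with Nδ ≤ i ≤ N. -/
set_option synthInstance.maxHeartbeats 1000000
set_option maxHeartbeats 2000000

open scoped Pointwise

/-- `Σ_j A`: the set of sums of `j` elements of `A`. -/
def sumSet {R : Type*} [CommRing R] (j : ℕ) (A : Set R) : Set R :=
  {x | ∃ a : Fin j → R, (∀ i, a i ∈ A) ∧ ∑ i, a i = x}

/-- `Π_j A`: the set of products of `j` elements of `A`. -/
def prodSet {R : Type*} [CommRing R] (j : ℕ) (A : Set R) : Set R :=
  {x | ∃ a : Fin j → R, (∀ i, a i ∈ A) ∧ ∏ i, a i = x}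

/-- `⟨A⟩_j := Σ_j Π_j A − Σ_j Π_j A`. -/
def genSet {R : Type*} [CommRing R] (j : ℕ) (A : Set R) : Set R :=
  sumSet j (prodSet j A) - sumSet j (prodSet j A)

/-- The residue map `π_{𝔭^m} : 𝒪 → 𝒪/⟨𝔭^m⟩`. -/
def resMap {O : Type*} [CommRing O] (ϖ : O) (m : ℕ) : O →+* O ⧸ Ideal.span {ϖ ^ m} :=
  Ideal.Quotient.mk (Ideal.span {ϖ ^ m})

/-- For `A ⊆ 𝒪/⟨𝔭^N⟩` (and `i ≤ N`), the image `π_{𝔭^i}(A) ⊆ 𝒪/⟨𝔭^i⟩`,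
computed as the image under `π_{𝔭^i}` of the full preimage of `A` in `𝒪`. -/
def resSet {O : Type*} [CommRing O] (ϖ : O) (N i : ℕ) (A : Set (O ⧸ Ideal.span {ϖ ^ N})) :
    Set (O ⧸ Ideal.span {ϖ ^ i}) :=
  resMap ϖ i '' (resMap ϖ N ⁻¹' A)

/-- `A ⊆ 𝒪/⟨𝔭^N⟩` is `(m_0,…,m_{N−1})`-regular. -/
def IsRegularSubset {O : Type*} [CommRing O] (ϖ : O) (N : ℕ) (m : ℕ → ℕ)
    (A : Set (O ⧸ Ideal.span {ϖ ^ N})) : Prop :=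
  ∀ n < N, ∀ x : O,
    resMap ϖ n x ∈ resSet ϖ N n A →
    Nat.card ↥(resSet ϖ N (n + 1) A ∩
      (resMap ϖ (n + 1) '' {y : O | ∃ z : O, y = x + ϖ ^ n * z})) = m n


namespace RegAux

variable {O : Type*} [CommRing O]

/-- The projection between quotients. -/
noncomputable def proj (ϖ : O) {i N : ℕ} (h : i ≤ N) :
    (O ⧸ Ideal.span {ϖ ^ N}) →+* (O ⧸ Ideal.span {ϖ ^ i}) :=
  Ideal.Quotient.factor (Ideal.span_singleton_le_span_singleton.mpr (pow_dvd_pow ϖ h))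

lemma proj_resMap (ϖ : O) {i N : ℕ} (h : i ≤ N) (x : O) :
    proj ϖ h (resMap ϖ N x) = resMap ϖ i x :=
  Ideal.Quotient.factor_mk _ x

lemma resMap_surjective (ϖ : O) (n : ℕ) : Function.Surjective (resMap ϖ n) :=
  Ideal.Quotient.mk_surjective

lemma resSet_eq_image (ϖ : O) {i N : ℕ} (h : i ≤ N) (A : Set (O ⧸ Ideal.span {ϖ ^ N})) :
    resSet ϖ N i A = proj ϖ h '' A := by
  ext ξ
  constructor
  · rintro ⟨x, hx, rfl⟩
    exact ⟨resMap ϖ N x, hx, proj_resMap ϖ h x⟩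
  · rintro ⟨a, ha, rfl⟩
    obtain ⟨x, rfl⟩ := resMap_surjective ϖ N a
    exact ⟨x, ha, (proj_resMap ϖ h x).symm⟩

lemma proj_proj (ϖ : O) {i m N : ℕ} (h1 : i ≤ m) (h2 : m ≤ N)
    (a : O ⧸ Ideal.span {ϖ ^ N}) :
    proj ϖ h1 (proj ϖ h2 a) = proj ϖ (h1.trans h2) a := by
  obtain ⟨x, rfl⟩ := resMap_surjective ϖ N a
  simp [proj_resMap]

lemma resSet_self (ϖ : O) (N : ℕ) (A : Set (O ⧸ Ideal.span {ϖ ^ N})) :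
    resSet ϖ N N A = A := by
  have hid : ∀ a : O ⧸ Ideal.span {ϖ ^ N}, proj ϖ (le_refl N) a = a := by
    intro a
    obtain ⟨x, rfl⟩ := resMap_surjective ϖ N a
    exact proj_resMap ϖ (le_refl N) x
  rw [resSet_eq_image ϖ (le_refl N)]
  ext a
  constructor
  · rintro ⟨b, hb, rfl⟩; rwa [hid b]
  · intro ha; exact ⟨a, ha, hid a⟩

lemma resSet_down (ϖ : O) {i N : ℕ} (h : i ≤ N) (A : Set (O ⧸ Ideal.span {ϖ ^ (N + 1)})) :
    resSet ϖ (N + 1) i A = resSet ϖ N i (proj ϖ (Nat.le_succ N) '' A) := by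
  rw [resSet_eq_image ϖ (h.trans (Nat.le_succ N)), resSet_eq_image ϖ h, Set.image_image]
  exact Set.image_congr' (fun a => (proj_proj ϖ h (Nat.le_succ N) a).symm)

lemma image_ball (ϖ : O) (n : ℕ) (x : O) :
    resMap ϖ (n + 1) '' {y : O | ∃ z : O, y = x + ϖ ^ n * z}
      = (proj ϖ (Nat.le_succ n)) ⁻¹' {resMap ϖ n x} := by
  ext w
  constructor
  · rintro ⟨y, ⟨z, rfl⟩, rfl⟩
    simp only [Set.mem_preimage, Set.mem_singleton_iff, proj_resMap]
    have : resMap ϖ n (x + ϖ ^ n * z) - resMap ϖ n x = 0 := by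
      rw [← map_sub, show x + ϖ ^ n * z - x = ϖ ^ n * z by ring]
      exact Ideal.Quotient.eq_zero_iff_mem.mpr (Ideal.mem_span_singleton'.mpr ⟨z, mul_comm z _⟩)
    exact sub_eq_zero.mp this
  · intro hw
    obtain ⟨u, rfl⟩ := resMap_surjective ϖ (n + 1) w
    have h1 : resMap ϖ n u = resMap ϖ n x := by
      simpa only [Set.mem_preimage, Set.mem_singleton_iff, proj_resMap] using hw
    obtain ⟨z, hz⟩ := Ideal.mem_span_singleton'.mp (Ideal.Quotient.eq.mp h1)
    exact ⟨u, ⟨z, by rw [mul_comm, hz]; ring⟩, rfl⟩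

lemma finite_quot (ϖ : O) (hfin : Finite (O ⧸ Ideal.span {ϖ ^ 1})) :
    ∀ n : ℕ, Finite (O ⧸ Ideal.span {ϖ ^ n}) := by
  intro n
  induction n with
  | zero =>
    have : Subsingleton (O ⧸ Ideal.span {ϖ ^ 0}) := by
      constructor
      intro a b
      obtain ⟨x, rfl⟩ := resMap_surjective ϖ 0 a
      obtain ⟨y, rfl⟩ := resMap_surjective ϖ 0 b
      exact Ideal.Quotient.eq.mpr (Ideal.mem_span_singleton'.mpr ⟨x - y, by rw [pow_zero, mul_one]⟩)
    exact Finite.of_subsingleton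
  | succ n ih =>
    haveI := ih
    haveI := hfin
    set s1 : (O ⧸ Ideal.span {ϖ ^ 1}) → O := Function.surjInv (resMap_surjective ϖ 1) with hs1
    set sn : (O ⧸ Ideal.span {ϖ ^ n}) → O := Function.surjInv (resMap_surjective ϖ n) with hsn
    have hG : Function.Surjective (fun ab : (O ⧸ Ideal.span {ϖ ^ 1}) × (O ⧸ Ideal.span {ϖ ^ n}) =>
        resMap ϖ (n + 1) (ϖ ^ n * s1 ab.1 + sn ab.2)) := by
      intro w
      obtain ⟨u, rfl⟩ := resMap_surjective ϖ (n + 1) w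
      set b := resMap ϖ n u with hb
      have hb2 : resMap ϖ n (sn b) = b := Function.surjInv_eq (resMap_surjective ϖ n) b
      obtain ⟨z, hz⟩ := Ideal.mem_span_singleton'.mp (Ideal.Quotient.eq.mp (hb2.trans hb))
      -- hz : z * ϖ ^ n = sn b - u
      set a := resMap ϖ 1 (-z) with ha
      have ha2 : resMap ϖ 1 (s1 a) = a := Function.surjInv_eq (resMap_surjective ϖ 1) a
      obtain ⟨w', hw'⟩ := Ideal.mem_span_singleton'.mp (Ideal.Quotient.eq.mp ha2)
      -- hw' : w' * ϖ ^ 1 = s1 a - (-z)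
      refine ⟨(a, b), ?_⟩
      simp only
      refine Ideal.Quotient.eq.mpr (Ideal.mem_span_singleton'.mpr ⟨w', ?_⟩)
      linear_combination ϖ ^ n * hw' + hz
    exact Finite.of_surjective _ hG

lemma ncard_fiber_le (ϖ : O) (hfin : Finite (O ⧸ Ideal.span {ϖ ^ 1})) (n : ℕ)
    (ξ : O ⧸ Ideal.span {ϖ ^ n}) :
    ((proj ϖ (Nat.le_succ n)) ⁻¹' {ξ} : Set (O ⧸ Ideal.span {ϖ ^ (n + 1)})).ncard
      ≤ Nat.card (O ⧸ Ideal.span {ϖ ^ 1}) := by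
  haveI := hfin
  haveI := finite_quot ϖ hfin (n + 1)
  rcases Set.eq_empty_or_nonempty ((proj ϖ (Nat.le_succ n)) ⁻¹' {ξ} :
      Set (O ⧸ Ideal.span {ϖ ^ (n + 1)})) with he | ⟨w₀, hw₀⟩
  · rw [he]; simp
  obtain ⟨u, rfl⟩ := resMap_surjective ϖ (n + 1) w₀
  have hu : resMap ϖ n u = ξ := by
    simpa only [Set.mem_preimage, Set.mem_singleton_iff, proj_resMap] using hw₀
  set s1 : (O ⧸ Ideal.span {ϖ ^ 1}) → O := Function.surjInv (resMap_surjective ϖ 1) with hs1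
  set f : (O ⧸ Ideal.span {ϖ ^ 1}) → (O ⧸ Ideal.span {ϖ ^ (n + 1)}) :=
    fun a => resMap ϖ (n + 1) (u + ϖ ^ n * s1 a) with hf
  have hsub : ((proj ϖ (Nat.le_succ n)) ⁻¹' {ξ} : Set (O ⧸ Ideal.span {ϖ ^ (n + 1)}))
      ⊆ Set.range f := by
    rintro w hw
    obtain ⟨v, rfl⟩ := resMap_surjective ϖ (n + 1) w
    have hv : resMap ϖ n v = ξ := by
      simpa only [Set.mem_preimage, Set.mem_singleton_iff, proj_resMap] using hw
    obtain ⟨z, hz⟩ := Ideal.mem_span_singleton'.mp (Ideal.Quotient.eq.mp (hv.trans hu.symm))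
    -- hz : z * ϖ ^ n = v - u
    set a := resMap ϖ 1 z with ha
    have ha2 : resMap ϖ 1 (s1 a) = a := Function.surjInv_eq (resMap_surjective ϖ 1) a
    obtain ⟨w', hw'⟩ := Ideal.mem_span_singleton'.mp (Ideal.Quotient.eq.mp ha2)
    refine ⟨a, ?_⟩
    rw [hf]
    simp only
    refine Ideal.Quotient.eq.mpr (Ideal.mem_span_singleton'.mpr ⟨w', ?_⟩)
    linear_combination ϖ ^ n * hw' - hz
  calc ((proj ϖ (Nat.le_succ n)) ⁻¹' {ξ} :
        Set (O ⧸ Ideal.span {ϖ ^ (n + 1)})).ncard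
      ≤ (Set.range f).ncard := Set.ncard_le_ncard hsub (Set.toFinite _)
    _ ≤ Nat.card (O ⧸ Ideal.span {ϖ ^ 1}) := by
        rw [← Set.ncard_univ, ← Set.image_univ]
        exact Set.ncard_image_le (Set.toFinite _)

end RegAux

section Counting

variable {X Y : Type*} [Finite X] [Finite Y]

open Classical in
lemma fiber_finset (g : X → Y) {S : Set X} (hS : S.Finite) (ξ : Y) :
    (S ∩ g ⁻¹' {ξ}).ncard = ((hS.toFinset.filter (fun a => g a = ξ)).card) := by
  classical
  rw [← Set.ncard_coe_finset]
  congr 1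
  ext a
  simp [Set.Finite.mem_toFinset hS]

open Classical in
lemma ncard_image_finset (g : X → Y) {S : Set X} (hS : S.Finite) :
    (g '' S).ncard = (hS.toFinset.image g).card := by
  classical
  rw [← Set.ncard_coe_finset]
  congr 1
  simp [Finset.coe_image, Set.Finite.coe_toFinset]

lemma ncard_uniform (g : X → Y) (S : Set X) (m : ℕ)
    (h : ∀ ξ ∈ g '' S, (S ∩ g ⁻¹' {ξ}).ncard = m) :
    S.ncard = m * (g '' S).ncard := by
  classical
  have hS : S.Finite := Set.toFinite S
  rw [Set.ncard_eq_toFinset_card S hS, ncard_image_finset g hS]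
  rw [Finset.card_eq_sum_card_fiberwise
    (f := g) (t := hS.toFinset.image g)
    (fun x hx => Finset.mem_image_of_mem g hx)]
  rw [Finset.sum_congr rfl (fun ξ hξ => ?_), Finset.sum_const, smul_eq_mul, mul_comm]
  rw [← fiber_finset g hS ξ]
  apply h
  obtain ⟨a, ha, rfl⟩ := Finset.mem_image.mp hξ
  exact ⟨a, (Set.Finite.mem_toFinset hS).mp ha, rfl⟩

lemma ncard_le_fiber_mul (g : X → Y) (S : Set X) (M : ℕ)
    (h : ∀ ξ : Y, (S ∩ g ⁻¹' {ξ}).ncard ≤ M) :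
    S.ncard ≤ M * (g '' S).ncard := by
  classical
  have hS : S.Finite := Set.toFinite S
  rw [Set.ncard_eq_toFinset_card S hS, ncard_image_finset g hS]
  rw [Finset.card_eq_sum_card_fiberwise
    (f := g) (t := hS.toFinset.image g)
    (fun x hx => Finset.mem_image_of_mem g hx)]
  calc ∑ ξ ∈ hS.toFinset.image g, ((hS.toFinset.filter (fun a => g a = ξ)).card)
      ≤ ∑ _ξ ∈ hS.toFinset.image g, M := by
        refine Finset.sum_le_sum (fun ξ _ => ?_)
        rw [← fiber_finset g hS ξ]
        exact h ξ
    _ = M * (hS.toFinset.image g).card := by rw [Finset.sum_const, smul_eq_mul, mul_comm]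

lemma level (g : X → Y) (q : ℕ) (hq : 3 ≤ q)
    (hfib : ∀ y : Y, (g ⁻¹' {y}).ncard ≤ q) (A : Set X) (hA : A.Nonempty) :
    ∃ m : ℕ, 1 ≤ m ∧ ∃ A₁ : Set X, A₁ ⊆ A ∧ A₁.Nonempty ∧
      (∀ ξ ∈ g '' A₁, (A₁ ∩ g ⁻¹' {ξ}).ncard = m) ∧
      ((A.ncard : ℝ) ≤ 2 * Real.log q * A₁.ncard) := by
  classical
  have hAfin : A.Finite := Set.toFinite A
  set s : Finset X := hAfin.toFinset with hs
  set t : Finset Y := s.image g with ht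
  set d : Y → ℕ := fun ξ => (s.filter (fun a => g a = ξ)).card with hd
  have hd_eq : ∀ ξ : Y, (A ∩ g ⁻¹' {ξ}).ncard = d ξ := fun ξ => fiber_finset g hAfin ξ
  have hd_le : ∀ ξ : Y, d ξ ≤ q := by
    intro ξ
    rw [← hd_eq ξ]
    exact le_trans (Set.ncard_le_ncard Set.inter_subset_right (Set.toFinite _)) (hfib ξ)
  have hd_pos : ∀ ξ ∈ t, 1 ≤ d ξ := by
    intro ξ hξ
    obtain ⟨a, ha, rfl⟩ := Finset.mem_image.mp hξ
    exact Finset.card_pos.mpr ⟨a, Finset.mem_filter.mpr ⟨ha, rfl⟩⟩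
  -- total count
  have htot : s.card = ∑ ξ ∈ t, d ξ :=
    Finset.card_eq_sum_card_fiberwise (fun x hx => Finset.mem_image_of_mem g hx)
  set c : ℕ → ℕ := fun m => (t.filter (fun ξ => m ≤ d ξ)).card with hc
  have hswap : ∑ ξ ∈ t, d ξ = ∑ m ∈ Finset.Icc 1 q, c m := by
    have h1 : ∀ ξ ∈ t, d ξ = ∑ m ∈ Finset.Icc 1 q, (if m ≤ d ξ then 1 else 0) := by
      intro ξ hξ
      have hfilt : (Finset.Icc 1 q).filter (fun m => m ≤ d ξ) = Finset.Icc 1 (d ξ) := by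
        ext m
        simp only [Finset.mem_filter, Finset.mem_Icc]
        have := hd_le ξ
        omega
      calc d ξ = (Finset.Icc 1 (d ξ)).card := by simp [Nat.card_Icc]
        _ = ∑ m ∈ Finset.Icc 1 q, (if m ≤ d ξ then 1 else 0) := by
            rw [← hfilt, Finset.card_filter]
    rw [Finset.sum_congr rfl h1, Finset.sum_comm]
    refine Finset.sum_congr rfl (fun m _ => ?_)
    exact (Finset.card_filter _ _).symm
  -- maximizer
  have hIcc : (Finset.Icc 1 q).Nonempty := ⟨1, by simp; omega⟩
  obtain ⟨m₀, hm₀mem, hm₀max⟩ := Finset.exists_max_image (Finset.Icc 1 q)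
    (fun m => m * c m) hIcc
  have hm₀1 : 1 ≤ m₀ := (Finset.mem_Icc.mp hm₀mem).1
  have hm₀q : m₀ ≤ q := (Finset.mem_Icc.mp hm₀mem).2
  have hq0 : (0:ℝ) < q := by positivity
  have hlog1 : 1 ≤ Real.log q := by
    rw [Real.le_log_iff_exp_le hq0]
    calc Real.exp 1 ≤ 2.7182818286 := Real.exp_one_lt_d9.le
      _ ≤ (3:ℝ) := by norm_num
      _ ≤ (q:ℝ) := by exact_mod_cast hq
  -- the key pigeonhole estimate
  have hkey : (s.card : ℝ) ≤ 2 * Real.log q * (m₀ * c m₀) := by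
    have hharm : ∑ m ∈ Finset.Icc 1 q, ((m:ℝ))⁻¹ ≤ 1 + Real.log q := by
      have h1 := harmonic_le_one_add_log q
      rw [harmonic_eq_sum_Icc] at h1
      have h2 : ((∑ i ∈ Finset.Icc 1 q, ((i:ℚ))⁻¹ : ℚ) : ℝ)
          = ∑ m ∈ Finset.Icc 1 q, ((m:ℝ))⁻¹ := by push_cast; rfl
      rw [← h2]
      exact_mod_cast h1
    have hstep : ∀ m ∈ Finset.Icc 1 q, (c m : ℝ) ≤ ((m:ℝ))⁻¹ * (m₀ * c m₀) := by
      intro m hm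
      have hm1 : 1 ≤ m := (Finset.mem_Icc.mp hm).1
      have hmpos : (0:ℝ) < m := by exact_mod_cast hm1
      rw [inv_mul_eq_div, le_div_iff₀ hmpos]
      have := hm₀max m hm
      calc (c m : ℝ) * m = ((m * c m : ℕ) : ℝ) := by push_cast; ring
        _ ≤ ((m₀ * c m₀ : ℕ) : ℝ) := by exact_mod_cast this
        _ = (m₀ : ℝ) * c m₀ := by push_cast; ring
    have hmc0 : (0:ℝ) ≤ (m₀ : ℝ) * c m₀ := by positivity
    calc (s.card : ℝ) = ∑ m ∈ Finset.Icc 1 q, (c m : ℝ) := by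
          rw [htot, hswap]; push_cast; rfl
      _ ≤ ∑ m ∈ Finset.Icc 1 q, ((m:ℝ))⁻¹ * (m₀ * c m₀) := Finset.sum_le_sum hstep
      _ = (∑ m ∈ Finset.Icc 1 q, ((m:ℝ))⁻¹) * (m₀ * c m₀) := by
          rw [Finset.sum_mul]
      _ ≤ (1 + Real.log q) * (m₀ * c m₀) := by
          exact mul_le_mul_of_nonneg_right hharm hmc0
      _ ≤ 2 * Real.log q * (m₀ * c m₀) := by nlinarith
  -- c m₀ ≥ 1
  have hscard : A.ncard = s.card := Set.ncard_eq_toFinset_card A hAfin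
  have hspos : 0 < s.card := by
    rw [← hscard]
    exact (Set.ncard_pos (Set.toFinite A)).mpr hA
  have hc1 : 1 ≤ c m₀ := by
    rcases Nat.eq_zero_or_pos (c m₀) with h0 | h1
    · exfalso
      rw [h0] at hkey
      push_cast at hkey
      have : (0:ℝ) < s.card := by exact_mod_cast hspos
      nlinarith [hkey]
    · exact h1
  -- construct the subset
  set T : Finset Y := t.filter (fun ξ => m₀ ≤ d ξ) with hT
  have hsubEx : ∀ ξ : Y, m₀ ≤ d ξ → ∃ u ⊆ s.filter (fun a => g a = ξ), u.card = m₀ :=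
    fun ξ hξ => Finset.exists_subset_card_eq hξ
  set sub : Y → Finset X := fun ξ => if h : m₀ ≤ d ξ then (hsubEx ξ h).choose else ∅ with hsubdef
  have hsub_sub : ∀ ξ : Y, m₀ ≤ d ξ → sub ξ ⊆ s.filter (fun a => g a = ξ) := by
    intro ξ h
    rw [hsubdef]
    simp only [dif_pos h]
    exact (hsubEx ξ h).choose_spec.1
  have hsub_card : ∀ ξ : Y, m₀ ≤ d ξ → (sub ξ).card = m₀ := by
    intro ξ h
    rw [hsubdef]
    simp only [dif_pos h]
    exact (hsubEx ξ h).choose_spec.2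
  have hsub_val : ∀ ξ : Y, ∀ x ∈ sub ξ, x ∈ s ∧ g x = ξ := by
    intro ξ x hx
    rcases le_or_gt m₀ (d ξ) with h | h
    · exact Finset.mem_filter.mp (hsub_sub ξ h hx)
    · exfalso
      rw [hsubdef] at hx
      simp only [dif_neg (by omega : ¬ m₀ ≤ d ξ)] at hx
      exact absurd hx (Finset.notMem_empty x)
  set A₁fin : Finset X := T.biUnion sub with hA₁fin
  have hdisj : ∀ ξ₁ ∈ T, ∀ ξ₂ ∈ T, ξ₁ ≠ ξ₂ → Disjoint (sub ξ₁) (sub ξ₂) := by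
    intro ξ₁ _ ξ₂ _ hne
    rw [Finset.disjoint_left]
    intro x h1 h2
    exact hne (((hsub_val ξ₁ x h1).2).symm.trans ((hsub_val ξ₂ x h2).2))
  have hA₁card : A₁fin.card = m₀ * T.card := by
    rw [hA₁fin, Finset.card_biUnion hdisj]
    rw [Finset.sum_congr rfl (fun ξ hξ => hsub_card ξ (Finset.mem_filter.mp hξ).2)]
    rw [Finset.sum_const, smul_eq_mul, mul_comm]
  set A₁ : Set X := ↑A₁fin with hA₁
  have hTc : T.card = c m₀ := rfl
  have hA₁sub : A₁ ⊆ A := by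
    intro x hx
    obtain ⟨ξ, _, hxξ⟩ := Finset.mem_biUnion.mp hx
    exact (Set.Finite.mem_toFinset hAfin).mp ((hsub_val ξ x hxξ).1)
  have hA₁ne : A₁.Nonempty := by
    have : 0 < A₁fin.card := by
      rw [hA₁card]
      exact Nat.mul_pos (by omega) (by omega)
    obtain ⟨x, hx⟩ := Finset.card_pos.mp this
    exact ⟨x, hx⟩
  refine ⟨m₀, hm₀1, A₁, hA₁sub, hA₁ne, ?_, ?_⟩
  · rintro ξ ⟨x, hx, rfl⟩
    obtain ⟨ξ', hξ'T, hxξ'⟩ := Finset.mem_biUnion.mp hx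
    have hgx : g x = ξ' := (hsub_val ξ' x hxξ').2
    have hfibeq : A₁ ∩ g ⁻¹' {g x} = ↑(sub ξ') := by
      ext y
      constructor
      · rintro ⟨hy1, hy2⟩
        obtain ⟨ξ'', hξ''T, hyξ''⟩ := Finset.mem_biUnion.mp hy1
        have : g y = ξ'' := (hsub_val ξ'' y hyξ'').2
        have hyx : g y = g x := hy2
        have heq : ξ'' = ξ' := this.symm.trans (hyx.trans hgx)
        exact Finset.mem_coe.mpr (heq ▸ hyξ'')
      · intro hy
        have := hsub_val ξ' y hy
        refine ⟨Finset.mem_biUnion.mpr ⟨ξ', hξ'T, hy⟩, ?_⟩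
        simp [this.2, hgx]
    rw [hfibeq, Set.ncard_coe_finset]
    exact hsub_card ξ' (Finset.mem_filter.mp hξ'T).2
  · have hA₁ncard : A₁.ncard = m₀ * c m₀ := by
      rw [hA₁, Set.ncard_coe_finset, hA₁card, hTc]
    rw [hA₁ncard, hscard]
    exact_mod_cast hkey

end Counting

-- max fiber / sumset lemma
open scoped Pointwise in
lemma exists_maxFiber {X Y : Type*} [Finite X] [AddCommGroup X] [AddCommGroup Y]
    (P : X →+ Y) (A : Set X) (hA : A.Nonempty) :
    ∃ M : ℕ, 1 ≤ M ∧ (∀ ξ : Y, (A ∩ ⇑P ⁻¹' {ξ}).ncard ≤ M) ∧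
      ((⇑P '' A).ncard * M ≤ Nat.card ↥(A + A)) := by
  classical
  obtain ⟨a₀, ha₀⟩ := hA
  set t : Finset Y := (Set.toFinite (⇑P '' A)).toFinset with htdef
  have hYne : t.Nonempty := ⟨P a₀, (Set.Finite.mem_toFinset _).mpr ⟨a₀, ha₀, rfl⟩⟩
  obtain ⟨ξ₀, _, hmax⟩ := Finset.exists_max_image t
    (fun ξ => (A ∩ ⇑P ⁻¹' {ξ}).ncard) hYne
  set M : ℕ := (A ∩ ⇑P ⁻¹' {ξ₀}).ncard with hM
  have hMle : ∀ ξ : Y, (A ∩ ⇑P ⁻¹' {ξ}).ncard ≤ M := by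
    intro ξ
    rcases Set.eq_empty_or_nonempty (A ∩ ⇑P ⁻¹' {ξ}) with he | ⟨a, ha1, ha2⟩
    · rw [he]; simp
    · refine hmax ξ ((Set.Finite.mem_toFinset _).mpr ⟨a, ha1, ha2⟩)
  have hM1 : 1 ≤ M := by
    refine le_trans ?_ (hMle (P a₀))
    have : a₀ ∈ A ∩ ⇑P ⁻¹' {P a₀} := ⟨ha₀, rfl⟩
    have := (Set.ncard_pos (Set.toFinite _)).mpr ⟨a₀, this⟩
    omega
  refine ⟨M, hM1, hMle, ?_⟩
  -- injection from (P '' A) × (A ∩ P⁻¹ ξ₀) into A + A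
  set F : Set X := A ∩ ⇑P ⁻¹' {ξ₀} with hF
  have hr : ∀ ch : ↥(⇑P '' A), ∃ a : X, a ∈ A ∧ P a = ↑ch := fun ch => by
    obtain ⟨a, ha, he⟩ := ch.2
    exact ⟨a, ha, he⟩
  set r : ↥(⇑P '' A) → X := fun ch => (hr ch).choose with hrdef
  have hr1 : ∀ ch, r ch ∈ A := fun ch => (hr ch).choose_spec.1
  have hr2 : ∀ ch, P (r ch) = ↑ch := fun ch => (hr ch).choose_spec.2
  set j : ↥(⇑P '' A) × ↥F → ↥(A + A) :=
    fun cf => ⟨r cf.1 + ↑cf.2, Set.add_mem_add (hr1 cf.1) cf.2.2.1⟩ with hj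
  have hjinj : Function.Injective j := by
    rintro ⟨ch, f⟩ ⟨ch', f'⟩ he
    have he' : r ch + ↑f = r ch' + ↑f' := congrArg Subtype.val he
    have hPf : P ↑f = ξ₀ := f.2.2
    have hPf' : P ↑f' = ξ₀ := f'.2.2
    have hP : (↑ch : Y) + ξ₀ = ↑ch' + ξ₀ := by
      have := congrArg P he'
      rwa [map_add, map_add, hr2, hr2, hPf, hPf'] at this
    have hcc : ch = ch' := Subtype.ext (add_right_cancel hP)
    have hrr : r ch = r ch' := by rw [hcc]
    have hff : (↑f : X) = ↑f' := by
      have := he'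
      rw [hrr] at this
      exact add_left_cancel this
    exact Prod.ext hcc (Subtype.ext hff)
  have hcard := Nat.card_le_card_of_injective j hjinj
  rw [Nat.card_prod] at hcard
  rwa [Nat.card_coe_set_eq, Nat.card_coe_set_eq] at hcard

-- appended: core lemma
namespace RegAux

variable {O : Type*} [CommRing O]

lemma core (ϖ : O) (hfin : Finite (O ⧸ Ideal.span {ϖ ^ 1}))
    (hq : 3 ≤ Nat.card (O ⧸ Ideal.span {ϖ ^ 1})) :
    ∀ N : ℕ, ∀ A : Set (O ⧸ Ideal.span {ϖ ^ N}), A.Nonempty →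
    ∃ A' : Set (O ⧸ Ideal.span {ϖ ^ N}), A' ⊆ A ∧ A'.Nonempty ∧ ∃ m : ℕ → ℕ,
      (∀ n, n < N → ∀ ξ : O ⧸ Ideal.span {ϖ ^ n}, ξ ∈ resSet ϖ N n A' →
        (resSet ϖ N (n + 1) A' ∩ (proj ϖ (Nat.le_succ n)) ⁻¹' {ξ}).ncard = m n) ∧
      ((A.ncard : ℝ) ≤ (2 * Real.log (Nat.card (O ⧸ Ideal.span {ϖ ^ 1}))) ^ N * A'.ncard) := by
  intro N
  induction N with
  | zero =>
    intro A hA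
    exact ⟨A, subset_rfl, hA, fun _ => 0, fun n hn => by omega, by simp⟩
  | succ N ih =>
    intro A hA
    haveI : Finite (O ⧸ Ideal.span {ϖ ^ (N + 1)}) := finite_quot ϖ hfin (N + 1)
    haveI : Finite (O ⧸ Ideal.span {ϖ ^ N}) := finite_quot ϖ hfin N
    set q : ℕ := Nat.card (O ⧸ Ideal.span {ϖ ^ 1}) with hqdef
    set g : (O ⧸ Ideal.span {ϖ ^ (N + 1)}) → (O ⧸ Ideal.span {ϖ ^ N}) :=
      ⇑(proj ϖ (Nat.le_succ N)) with hg
    obtain ⟨m₀, hm₀1, A₁, hA₁A, hA₁ne, hfib₁, hsize₁⟩ :=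
      level g q hq (fun y => by rw [hg, hqdef]; exact ncard_fiber_le ϖ hfin N y) A hA
    set B : Set (O ⧸ Ideal.span {ϖ ^ N}) := g '' A₁ with hB
    have hBne : B.Nonempty := hA₁ne.image g
    obtain ⟨B', hB'B, hB'ne, m', hreg', hsize'⟩ := ih B hBne
    set A' : Set (O ⧸ Ideal.span {ϖ ^ (N + 1)}) := A₁ ∩ g ⁻¹' B' with hA'
    have himg : g '' A' = B' := by
      apply subset_antisymm
      · rintro ξ ⟨a, ⟨ha1, ha2⟩, rfl⟩
        exact ha2
      · intro b hb
        obtain ⟨a, ha, rfl⟩ := hB'B hb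
        exact ⟨a, ⟨ha, hb⟩, rfl⟩
    have hfibeq : ∀ ξ ∈ B', A' ∩ g ⁻¹' {ξ} = A₁ ∩ g ⁻¹' {ξ} := by
      intro ξ hξ
      ext a
      constructor
      · rintro ⟨⟨h1, _⟩, h3⟩; exact ⟨h1, h3⟩
      · rintro ⟨h1, h3⟩
        have : g a = ξ := h3
        exact ⟨⟨h1, by rw [Set.mem_preimage, this]; exact hξ⟩, h3⟩
    have hfib' : ∀ ξ ∈ B', (A' ∩ g ⁻¹' {ξ}).ncard = m₀ := by
      intro ξ hξ
      rw [hfibeq ξ hξ]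
      exact hfib₁ ξ (hB'B hξ)
    have hA'card : A'.ncard = m₀ * B'.ncard := by
      rw [← himg]
      exact ncard_uniform g A' m₀ (fun ξ hξ => hfib' ξ (himg ▸ hξ))
    have hA₁card : A₁.ncard = m₀ * B.ncard := ncard_uniform g A₁ m₀ hfib₁
    have hA'ne : A'.Nonempty := by
      obtain ⟨b, hb⟩ := hB'ne
      obtain ⟨a, ha, rfl⟩ := hB'B hb
      exact ⟨a, ha, hb⟩
    refine ⟨A', fun a ha => hA₁A ha.1, hA'ne, fun n => if n = N then m₀ else m' n, ?_, ?_⟩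
    · intro n hn ξ hξ
      rcases Nat.lt_succ_iff_lt_or_eq.mp hn with hlt | rfl
      · show _ = if n = N then m₀ else m' n
        rw [if_neg (Nat.ne_of_lt hlt)]
        have e1 : resSet ϖ (N + 1) n A' = resSet ϖ N n B' := by
          rw [resSet_down ϖ (le_of_lt hlt) A', ← hg, himg]
        have e2 : resSet ϖ (N + 1) (n + 1) A' = resSet ϖ N (n + 1) B' := by
          rw [resSet_down ϖ (Nat.succ_le_of_lt hlt) A', ← hg, himg]
        rw [e2]
        exact hreg' n hlt ξ (by rwa [e1] at hξ)
      · show _ = if n = n then m₀ else m' n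
        rw [if_pos rfl]
        have e1 : resSet ϖ (n + 1) n A' = B' := by
          rw [resSet_eq_image ϖ (Nat.le_succ n) A', ← hg, himg]
        have e2 : resSet ϖ (n + 1) (n + 1) A' = A' := resSet_self ϖ (n + 1) A'
        rw [e2]
        exact hfib' ξ (by rwa [e1] at hξ)
    · have hq0 : (0:ℝ) < q := by
        have : 0 < q := by omega
        exact_mod_cast this
      have hlog1 : 1 ≤ Real.log q := by
        rw [Real.le_log_iff_exp_le hq0]
        calc Real.exp 1 ≤ 2.7182818286 := Real.exp_one_lt_d9.le
          _ ≤ (3:ℝ) := by norm_num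
          _ ≤ (q:ℝ) := by exact_mod_cast hq
      have hL0 : (0:ℝ) ≤ 2 * Real.log q := by linarith
      have hm₀0 : (0:ℝ) ≤ (m₀ : ℝ) := by positivity
      calc (A.ncard : ℝ) ≤ 2 * Real.log q * A₁.ncard := hsize₁
        _ = 2 * Real.log q * ((m₀ : ℝ) * B.ncard) := by rw [hA₁card]; push_cast; ring
        _ ≤ 2 * Real.log q * ((m₀ : ℝ) * ((2 * Real.log q) ^ N * B'.ncard)) := by
            apply mul_le_mul_of_nonneg_left _ hL0
            exact mul_le_mul_of_nonneg_left hsize' hm₀0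
        _ = (2 * Real.log q) ^ (N + 1) * ((m₀ : ℝ) * B'.ncard) := by ring
        _ = (2 * Real.log q) ^ (N + 1) * A'.ncard := by rw [hA'card]; push_cast; ring

end RegAux

open scoped Pointwise in
lemma RegAux.main_core {O : Type*} [CommRing O] (ϖ : O)
    (δ ε δ' : ℝ) (hδ : 0 < δ) (hδε : δ < ε) (hε : ε < 1)
    (hδ'0 : 0 < δ') (hδ'le : δ' ≤ ε * δ / 4)
    (N : ℕ) (A : Set (O ⧸ Ideal.span {ϖ ^ N}))
    (hq3 : 3 ≤ Nat.card (O ⧸ Ideal.span {ϖ ^ 1}))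
    (hqkey : 2 * Real.log (Nat.card (O ⧸ Ideal.span {ϖ ^ 1}))
      ≤ (Nat.card (O ⧸ Ideal.span {ϖ ^ 1}) : ℝ) ^ (ε * δ / 4))
    (h1 : ∀ i : ℕ, (N : ℝ) * δ' ≤ (i : ℝ) → i ≤ N →
      (Nat.card (O ⧸ Ideal.span {ϖ ^ 1}) : ℝ) ^ ((i : ℝ) * ε) ≤
        (Nat.card (resSet ϖ N i A) : ℝ))
    (h2 : (Nat.card ↥(A + A) : ℝ) ≤
      (Nat.card A : ℝ) * (Nat.card (O ⧸ Ideal.span {ϖ ^ 1}) : ℝ) ^ ((N : ℝ) * δ')) :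
    ∃ A' ⊆ A, ∃ m : ℕ → ℕ,
      IsRegularSubset ϖ N m A' ∧
      (Nat.card A : ℝ) / (2 * Real.log (Nat.card (O ⧸ Ideal.span {ϖ ^ 1}))) ^ N ≤
        (Nat.card A' : ℝ) ∧
      (∀ i : ℕ, (N : ℝ) * δ ≤ (i : ℝ) → i ≤ N →
        (Nat.card (O ⧸ Ideal.span {ϖ ^ 1}) : ℝ) ^ ((i : ℝ) * (ε / 2)) ≤
          (Nat.card (resSet ϖ N i A') : ℝ)) := by
  have hε0 : 0 < ε := lt_trans hδ hδε
  set cst : ℝ := ε * δ / 4 with hcst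
  have hc0 : 0 < cst := by positivity
  set q : ℕ := Nat.card (O ⧸ Ideal.span {ϖ ^ 1}) with hqdef
  have hq0 : (0:ℝ) < q := by
    have : 0 < q := by omega
    exact_mod_cast this
  have hq1 : (1:ℝ) ≤ q := by
    have : 1 ≤ q := by omega
    exact_mod_cast this
  have hfin1 : Finite (O ⧸ Ideal.span {ϖ ^ 1}) :=
    (Nat.card_pos_iff.mp (by omega)).2
  haveI hfinN : Finite (O ⧸ Ideal.span {ϖ ^ N}) := RegAux.finite_quot ϖ hfin1 N
  have hlog1 : 1 ≤ Real.log q := by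
    rw [Real.le_log_iff_exp_le hq0]
    calc Real.exp 1 ≤ 2.7182818286 := Real.exp_one_lt_d9.le
      _ ≤ (3:ℝ) := by norm_num
      _ ≤ (q:ℝ) := by exact_mod_cast hq3
  set L : ℝ := 2 * Real.log q with hL
  have hL2 : (2:ℝ) ≤ L := by rw [hL]; linarith
  have hL0 : (0:ℝ) < L := by linarith
  -- A is nonempty
  have hδ'le1 : δ' ≤ 1 := by nlinarith
  have h1N := h1 N (by nlinarith [Nat.cast_nonneg (α := ℝ) N]) (le_refl N)
  rw [RegAux.resSet_self] at h1N
  have hApos : 0 < Nat.card ↥A := by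
    have hp := Real.rpow_pos_of_pos hq0 ((N:ℝ) * ε)
    have : (0:ℝ) < (Nat.card ↥A : ℝ) := lt_of_lt_of_le hp h1N
    exact_mod_cast this
  have hAne : A.Nonempty := Set.nonempty_coe_sort.mp (Nat.card_pos_iff.mp hApos).1
  -- extract the regular subset
  obtain ⟨A', hA'A, hA'ne, m, hreg, hsize⟩ := RegAux.core ϖ hfin1 hq3 N A hAne
  have hsize' : (A.ncard : ℝ) ≤ L ^ N * A'.ncard := hsize
  refine ⟨A', hA'A, m, ?_, ?_, ?_⟩
  · -- regularity
    intro n hn x hx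
    rw [RegAux.image_ball ϖ n x, Nat.card_coe_set_eq]
    exact hreg n hn (resMap ϖ n x) hx
  · -- cardinality lower bound
    rw [Nat.card_coe_set_eq, Nat.card_coe_set_eq, div_le_iff₀ (by positivity)]
    calc (A.ncard : ℝ) ≤ L ^ N * A'.ncard := hsize'
      _ = (A'.ncard : ℝ) * L ^ N := by ring
  · -- projection size bounds
    intro i hNδ hiN
    haveI hfini : Finite (O ⧸ Ideal.span {ϖ ^ i}) := RegAux.finite_quot ϖ hfin1 i
    have hNδ'i : (N : ℝ) * δ' ≤ (i : ℝ) := by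
      refine le_trans ?_ hNδ
      have : δ' ≤ δ := by nlinarith
      nlinarith [Nat.cast_nonneg (α := ℝ) N]
    have h1i := h1 i hNδ'i hiN
    set P : (O ⧸ Ideal.span {ϖ ^ N}) →+ (O ⧸ Ideal.span {ϖ ^ i}) :=
      AddMonoidHom.mk' ⇑(RegAux.proj ϖ hiN) (fun a b => map_add _ a b) with hP
    have hPcoe : ⇑P = ⇑(RegAux.proj ϖ hiN) := rfl
    obtain ⟨M, hM1, hMle, hMcard⟩ := exists_maxFiber P A hAne
    have hPA : resSet ϖ N i A = ⇑P '' A := by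
      rw [hPcoe]; exact RegAux.resSet_eq_image ϖ hiN A
    have hPA' : resSet ϖ N i A' = ⇑P '' A' := by
      rw [hPcoe]; exact RegAux.resSet_eq_image ϖ hiN A'
    have hA'fib : ∀ ξ, (A' ∩ ⇑P ⁻¹' {ξ}).ncard ≤ M := fun ξ =>
      le_trans (Set.ncard_le_ncard (Set.inter_subset_inter_left _ hA'A)
        (Set.toFinite _)) (hMle ξ)
    have hk2 : A'.ncard ≤ M * (⇑P '' A').ncard := ncard_le_fiber_mul ⇑P A' M hA'fib
    have hMr1 : (1:ℝ) ≤ (M:ℝ) := by exact_mod_cast hM1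
    have hk1 : (A.ncard : ℝ) ≤ L ^ N * (A'.ncard : ℝ) := hsize'
    have hk2' : (A'.ncard : ℝ) ≤ (M:ℝ) * ((⇑P '' A').ncard : ℝ) := by exact_mod_cast hk2
    have hk3 : ((⇑P '' A).ncard : ℝ) * (M:ℝ) ≤ (A.ncard : ℝ) * (q:ℝ) ^ ((N:ℝ) * δ') := by
      have hc1 : (((⇑P '' A).ncard * M : ℕ) : ℝ) ≤ (Nat.card ↥(A + A) : ℝ) := by
        exact_mod_cast hMcard
      have hc2 : (Nat.card ↥A : ℝ) = (A.ncard : ℝ) := by rw [Nat.card_coe_set_eq]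
      calc ((⇑P '' A).ncard : ℝ) * (M:ℝ) = (((⇑P '' A).ncard * M : ℕ) : ℝ) := by
            push_cast; ring
        _ ≤ (Nat.card ↥(A + A) : ℝ) := hc1
        _ ≤ (Nat.card ↥A : ℝ) * (q:ℝ) ^ ((N:ℝ) * δ') := h2
        _ = (A.ncard : ℝ) * (q:ℝ) ^ ((N:ℝ) * δ') := by rw [hc2]
    rw [hPA, Nat.card_coe_set_eq] at h1i
    have hk4 : (q:ℝ) ^ ((i:ℝ) * ε) ≤ ((⇑P '' A).ncard : ℝ) := h1i
    -- exponent bookkeeping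
    have hkey2 : L ^ N * (q:ℝ) ^ ((N:ℝ) * δ') ≤ (q:ℝ) ^ ((i:ℝ) * (ε / 2)) := by
      have hLN : L ^ N ≤ (q:ℝ) ^ (cst * N) := by
        calc L ^ N ≤ ((q:ℝ) ^ cst) ^ N := pow_le_pow_left₀ (le_of_lt hL0) hqkey N
          _ = (q:ℝ) ^ (cst * N) := by
              rw [← Real.rpow_natCast ((q:ℝ) ^ cst) N, ← Real.rpow_mul (le_of_lt hq0)]
      have hexp : cst * N + (N:ℝ) * δ' ≤ (i:ℝ) * (ε / 2) := by
        have hNr : (0:ℝ) ≤ (N:ℝ) := Nat.cast_nonneg N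
        have hNδi : (N:ℝ) * δ ≤ (i:ℝ) := hNδ
        nlinarith [mul_le_mul_of_nonneg_left hδ'le hNr]
      calc L ^ N * (q:ℝ) ^ ((N:ℝ) * δ')
          ≤ (q:ℝ) ^ (cst * N) * (q:ℝ) ^ ((N:ℝ) * δ') :=
            mul_le_mul_of_nonneg_right hLN (le_of_lt (Real.rpow_pos_of_pos hq0 _))
        _ = (q:ℝ) ^ (cst * N + (N:ℝ) * δ') := by rw [← Real.rpow_add hq0]
        _ ≤ (q:ℝ) ^ ((i:ℝ) * (ε / 2)) := Real.rpow_le_rpow_of_exponent_le hq1 hexp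
    -- put everything together
    have hQi : (0:ℝ) < (q:ℝ) ^ ((i:ℝ) * (ε / 2)) := Real.rpow_pos_of_pos hq0 _
    have hQd0 : (0:ℝ) < (q:ℝ) ^ ((N:ℝ) * δ') := Real.rpow_pos_of_pos hq0 _
    have hbr'0 : (0:ℝ) ≤ ((⇑P '' A').ncard : ℝ) := Nat.cast_nonneg _
    have hMr0 : (0:ℝ) ≤ (M:ℝ) := by linarith
    have he1 : (q:ℝ) ^ ((i:ℝ) * ε)
        = (q:ℝ) ^ ((i:ℝ) * (ε / 2)) * (q:ℝ) ^ ((i:ℝ) * (ε / 2)) := by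
      rw [← Real.rpow_add hq0]
      ring_nf
    have hmain : ((q:ℝ) ^ ((i:ℝ) * (ε / 2)) * (M:ℝ)) * (q:ℝ) ^ ((i:ℝ) * (ε / 2))
        ≤ ((q:ℝ) ^ ((i:ℝ) * (ε / 2)) * (M:ℝ)) * ((⇑P '' A').ncard : ℝ) := by
      calc ((q:ℝ) ^ ((i:ℝ) * (ε / 2)) * (M:ℝ)) * (q:ℝ) ^ ((i:ℝ) * (ε / 2))
          = (q:ℝ) ^ ((i:ℝ) * ε) * (M:ℝ) := by rw [he1]; ring
        _ ≤ ((⇑P '' A).ncard : ℝ) * (M:ℝ) := mul_le_mul_of_nonneg_right hk4 hMr0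
        _ ≤ (A.ncard : ℝ) * (q:ℝ) ^ ((N:ℝ) * δ') := hk3
        _ ≤ (L ^ N * (A'.ncard : ℝ)) * (q:ℝ) ^ ((N:ℝ) * δ') :=
            mul_le_mul_of_nonneg_right hk1 (le_of_lt hQd0)
        _ ≤ (L ^ N * ((M:ℝ) * ((⇑P '' A').ncard : ℝ))) * (q:ℝ) ^ ((N:ℝ) * δ') :=
            mul_le_mul_of_nonneg_right
              (mul_le_mul_of_nonneg_left hk2' (le_of_lt (pow_pos hL0 N)))
              (le_of_lt hQd0)
        _ = (L ^ N * (q:ℝ) ^ ((N:ℝ) * δ')) * ((M:ℝ) * ((⇑P '' A').ncard : ℝ)) := by ring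
        _ ≤ (q:ℝ) ^ ((i:ℝ) * (ε / 2)) * ((M:ℝ) * ((⇑P '' A').ncard : ℝ)) :=
            mul_le_mul_of_nonneg_right hkey2 (by positivity)
        _ = ((q:ℝ) ^ ((i:ℝ) * (ε / 2)) * (M:ℝ)) * ((⇑P '' A').ncard : ℝ) := by ring
    have hfinal : (q:ℝ) ^ ((i:ℝ) * (ε / 2)) ≤ ((⇑P '' A').ncard : ℝ) := by
      refine le_of_mul_le_mul_left hmain ?_
      nlinarith
    rw [hPA', Nat.card_coe_set_eq]
    exact hfinal

/-- **Lemma 15 (extraction of a large regular subset).**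
Let `0 < δ < ε < 1` and let the residue field be large (depending on `ε, δ`). Then for any
`0 < δ' ≤ εδ/4` and any `A ⊆ π_{𝔭^N}(𝒪)` with `|π_{𝔭^i}(A)| ≥ |𝔣|^{iε}` for `Nδ' ≤ i ≤ N`
and `|A + A| ≤ |A||𝔣|^{Nδ'}`, there is a regular subset `A' ⊆ A` with
`|A'| ≥ |A|/(2 log |𝔣|)^N` and `|π_{𝔭^i}(A')| ≥ |𝔣|^{iε/2}` for `Nδ ≤ i ≤ N`. -/
theorem regular_subset_extraction
    (δ ε : ℝ) (hδ : 0 < δ) (hδε : δ < ε) (hε : ε < 1) :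
    ∃ F₀ : ℕ,
      ∀ (p : ℕ) [Fact p.Prime]
        (K : Type) [Field K] [Algebra ℚ_[p] K] [FiniteDimensional ℚ_[p] K]
        [Algebra ℤ_[p] K] [IsScalarTower ℤ_[p] ℚ_[p] K]
        (O : Subalgebra ℤ_[p] K), O = integralClosure ℤ_[p] K →
      ∀ ϖ : O, Irreducible ϖ →
      -- the residue field is large (depending on `ε` and `δ`)
      F₀ ≤ Nat.card (O ⧸ Ideal.span {ϖ ^ 1}) →
      ∀ δ' : ℝ, 0 < δ' → δ' ≤ ε * δ / 4 →
      ∀ N : ℕ, 0 < N → ∀ A : Set (O ⧸ Ideal.span {ϖ ^ N}),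
        -- (1) `|π_{𝔭^i}(A)| ≥ |𝔣|^{iε}` for `Nδ' ≤ i ≤ N`
        (∀ i : ℕ, (N : ℝ) * δ' ≤ (i : ℝ) → i ≤ N →
          (Nat.card (O ⧸ Ideal.span {ϖ ^ 1}) : ℝ) ^ ((i : ℝ) * ε) ≤
            (Nat.card (resSet ϖ N i A) : ℝ)) →
        -- (2) `|A + A| ≤ |A||𝔣|^{Nδ'}`
        ((Nat.card ↥(A + A) : ℝ) ≤
          (Nat.card A : ℝ) * (Nat.card (O ⧸ Ideal.span {ϖ ^ 1}) : ℝ) ^ ((N : ℝ) * δ')) →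
        ∃ A' ⊆ A, ∃ m : ℕ → ℕ,
          IsRegularSubset ϖ N m A' ∧
          (Nat.card A : ℝ) / (2 * Real.log (Nat.card (O ⧸ Ideal.span {ϖ ^ 1}))) ^ N ≤
            (Nat.card A' : ℝ) ∧
          (∀ i : ℕ, (N : ℝ) * δ ≤ (i : ℝ) → i ≤ N →
            (Nat.card (O ⧸ Ideal.span {ϖ ^ 1}) : ℝ) ^ ((i : ℝ) * (ε / 2)) ≤
              (Nat.card (resSet ϖ N i A') : ℝ)) := by
  have hε0 : 0 < ε := lt_trans hδ hδε
  set cst : ℝ := ε * δ / 4 with hcst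
  have hc0 : 0 < cst := by positivity
  obtain ⟨n₀, hn₀⟩ := exists_nat_ge ((4 / cst) ^ ((2:ℝ) / cst) : ℝ)
  refine ⟨max 3 n₀, ?_⟩
  intro p _ K _ _ _ _ _ O hO ϖ hϖ hcard δ' hδ'0 hδ'le N hN A h1 h2
  have hq3 : 3 ≤ Nat.card (↥O ⧸ Ideal.span {ϖ ^ 1}) := le_trans (le_max_left 3 n₀) hcard
  -- the key numeric consequence of largeness of the residue field
  have hqkey : 2 * Real.log (Nat.card (↥O ⧸ Ideal.span {ϖ ^ 1}))
      ≤ (Nat.card (↥O ⧸ Ideal.span {ϖ ^ 1}) : ℝ) ^ cst := by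
    set q : ℕ := Nat.card (↥O ⧸ Ideal.span {ϖ ^ 1}) with hqdef
    have hqn₀ : (n₀ : ℝ) ≤ q := by
      exact_mod_cast le_trans (le_max_right 3 n₀) hcard
    have hq0 : (0:ℝ) < q := by
      have : 0 < q := by omega
      exact_mod_cast this
    have hq1 : (1:ℝ) ≤ q := by
      have : 1 ≤ q := by omega
      exact_mod_cast this
    have h45 : 4 / cst ≤ (q:ℝ) ^ (cst / 2) := by
      calc 4 / cst = ((4 / cst) ^ ((2:ℝ) / cst)) ^ (cst / 2) := by
            rw [← Real.rpow_mul (by positivity)]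
            rw [show (2:ℝ) / cst * (cst / 2) = 1 by field_simp]
            rw [Real.rpow_one]
        _ ≤ (q:ℝ) ^ (cst / 2) :=
            Real.rpow_le_rpow (by positivity) (hn₀.trans hqn₀) (by positivity)
    have hlogle : Real.log ((q:ℝ) ^ (cst / 2)) ≤ (q:ℝ) ^ (cst / 2) :=
      Real.log_le_self (by positivity)
    have hlognn : 0 ≤ Real.log ((q:ℝ) ^ (cst / 2)) :=
      Real.log_nonneg (Real.one_le_rpow hq1 (by positivity))
    have heq : 2 * Real.log (q:ℝ) = (4 / cst) * Real.log ((q:ℝ) ^ (cst / 2)) := by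
      rw [Real.log_rpow hq0]
      field_simp
      ring
    calc 2 * Real.log (q:ℝ) = (4 / cst) * Real.log ((q:ℝ) ^ (cst / 2)) := heq
      _ ≤ (q:ℝ) ^ (cst / 2) * ((q:ℝ) ^ (cst / 2)) :=
          mul_le_mul h45 hlogle hlognn (by positivity)
      _ = (q:ℝ) ^ cst := by
          rw [← Real.rpow_add hq0]
          norm_num
  exact RegAux.main_core ϖ δ ε δ' hδ hδε hε hδ'0 hδ'le N A hq3 hqkey h1 h2
end
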